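/- Let G be a finite group with 1 ∈ CD(G). If G = AB where A and B are abelian subgroups of G, then G is the trivial group. -/

import Mathlib

open Pointwise

/-- The Chermak-Delgado measure of a subgroup: `m_G(H) = |H| * |C_G(H)|`. -/
noncomputable def cdMeasure {G : Type*} [Group G] (H : Subgroup G) : Nat :=
  Nat.card H * Nat.card (Subgroup.centralizer (H : Set G))

/-- The Chermak-Delgado lattice of `G`: the subgroups of maximal Chermak-Delgado measure. -/
def CD (G : Type*) [Group G] : Set (Subgroup G) :=
  {H | ∀ K : Subgroup G, cdMeasure K ≤ cdMeasure H}

set_option maxHeartbeats 1000000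

namespace CDproof
open Subgroup Set

universe u

variable {G : Type*} [Group G]

/-- |X*Y| * |X∩Y| = |X| * |Y| for subgroups of a finite group. -/
lemma card_mul_inf [Finite G] (X Y : Subgroup G) :
    Nat.card ((X : Set G) * (Y : Set G) : Set G) * Nat.card (X ⊓ Y : Subgroup G)
      = Nat.card X * Nat.card Y := by
  classical
  set D : Subgroup Y := (X ⊓ Y).subgroupOf Y with hD
  obtain ⟨T, hT, -⟩ : ∃ T : Set Y, Subgroup.IsComplement (D : Set Y) T ∧ (1 : Y) ∈ T :=
    Subgroup.exists_isComplement_right D 1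
  have hmem : ∀ (x : X) (t : T), (x : G) * ((t : Y) : G) ∈ (X : Set G) * (Y : Set G) := by
    intro x t
    exact Set.mul_mem_mul x.2 (t : Y).2
  let f : X × T → ((X : Set G) * (Y : Set G) : Set G) :=
    fun p => ⟨(p.1 : G) * ((p.2 : Y) : G), hmem p.1 p.2⟩
  have hf : Function.Bijective f := by
    constructor
    · rintro ⟨x, t⟩ ⟨x', t'⟩ h
      have h' : (x : G) * ((t : Y) : G) = (x' : G) * ((t' : Y) : G) := congrArg Subtype.val h
      have hx2 : (x : G) = (x' : G) * ((t' : Y) : G) * (((t : Y)) : G)⁻¹ := by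
        rw [eq_mul_inv_iff_mul_eq]; exact h'
      have hw : ((x' : G))⁻¹ * (x : G) = ((t' : Y) : G) * (((t : Y)) : G)⁻¹ := by
        rw [inv_mul_eq_iff_eq_mul, ← mul_assoc]; exact hx2
      have hwX : ((x' : G))⁻¹ * (x : G) ∈ X := mul_mem (inv_mem x'.2) x.2
      have hwY : ((x' : G))⁻¹ * (x : G) ∈ Y := by
        rw [hw]; exact mul_mem (t' : Y).2 (inv_mem (t : Y).2)
      set d : Y := ⟨((x' : G))⁻¹ * (x : G), hwY⟩ with hd
      have hdD : d ∈ (D : Set Y) := by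
        rw [SetLike.mem_coe, hD, Subgroup.mem_subgroupOf]
        exact ⟨hwX, hwY⟩
      have ht' : d * (t : Y) = (t' : Y) := by
        apply Subtype.ext
        push_cast [hd]
        rw [hw, inv_mul_cancel_right]
      have hD1 : (1 : Y) ∈ (D : Set Y) := SetLike.mem_coe.mpr (one_mem D)
      have hinj := hT.1 (a₁ := (⟨d, hdD⟩, t)) (a₂ := (⟨(1 : Y), hD1⟩, t')) ?_
      · have h1 : (⟨d, hdD⟩ : (D : Set Y)) = ⟨(1 : Y), hD1⟩ :=
          (Prod.ext_iff.mp hinj).1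
        have h2 : t = t' := (Prod.ext_iff.mp hinj).2
        have hd1 : d = 1 := congrArg Subtype.val h1
        have hval : ((x' : G))⁻¹ * (x : G) = 1 := by
          have := congrArg Subtype.val hd1
          simpa [hd] using this
        exact Prod.ext_iff.mpr ⟨Subtype.ext (inv_mul_eq_one.mp hval).symm, h2⟩
      · show ((⟨d, hdD⟩ : (D : Set Y)) : Y) * ((t : T) : Y)
            = ((⟨(1 : Y), hD1⟩ : (D : Set Y)) : Y) * ((t' : T) : Y)
        simpa using ht'
    · rintro ⟨g, hg⟩
      obtain ⟨x, hx, y, hy, rfl⟩ := hg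
      obtain ⟨⟨d, t⟩, hdt⟩ := hT.2 ⟨y, hy⟩
      have hdD : (((d : Y)) : G) ∈ X ⊓ Y :=
        Subgroup.mem_subgroupOf.mp (SetLike.mem_coe.mp d.2)
      refine ⟨(⟨x, hx⟩ * ⟨(((d : Y)) : G), hdD.1⟩, t), ?_⟩
      apply Subtype.ext
      show ((⟨x, hx⟩ * ⟨(((d : Y)) : G), hdD.1⟩ : X) : G) * ((t : Y) : G) = x * y
      have hyeq : (((d : Y)) : G) * ((t : Y) : G) = y := by
        have := congrArg (fun (z : Y) => (z : G)) hdt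
        simpa using this
      push_cast
      rw [mul_assoc, hyeq]
  have hcard1 : Nat.card ((X : Set G) * (Y : Set G) : Set G) = Nat.card X * Nat.card T := by
    rw [← Nat.card_prod]
    exact (Nat.card_eq_of_bijective f hf).symm
  have hcard2 : Nat.card D * Nat.card T = Nat.card Y := hT.card_mul
  have hcard3 : Nat.card D = Nat.card (X ⊓ Y : Subgroup G) :=
    Nat.card_congr (Subgroup.subgroupOfEquivOfLe inf_le_right).toEquiv
  calc Nat.card ((X : Set G) * (Y : Set G) : Set G) * Nat.card (X ⊓ Y : Subgroup G)
      = Nat.card X * Nat.card T * Nat.card D := by rw [hcard1, hcard3]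
    _ = Nat.card X * (Nat.card D * Nat.card T) := by ring
    _ = Nat.card X * Nat.card Y := by rw [hcard2]

lemma card_le_of_le [Finite G] {X Y : Subgroup G} (h : X ≤ Y) : Nat.card X ≤ Nat.card Y :=
  Nat.card_mono (Y : Set G).toFinite h

lemma eq_of_le_of_card_le [Finite G] {X Y : Subgroup G} (h : X ≤ Y)
    (hc : Nat.card Y ≤ Nat.card X) : X = Y := by
  have hs : (X : Set G) = (Y : Set G) := by
    apply Set.eq_of_subset_of_ncard_le h
    rw [← Nat.card_coe_set_eq, ← Nat.card_coe_set_eq]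
    exact hc
  exact SetLike.coe_injective hs

lemma set_subset_closure_sup (H K : Subgroup G) :
    (H : Set G) * (K : Set G) ⊆ ((H ⊔ K : Subgroup G) : Set G) := by
  rintro x ⟨a, ha, b, hb, rfl⟩
  exact mul_mem_sup ha hb

lemma centralizer_sup (H K : Subgroup G) :
    Subgroup.centralizer ((H ⊔ K : Subgroup G) : Set G)
      = Subgroup.centralizer (H : Set G) ⊓ Subgroup.centralizer (K : Set G) := by
  apply le_antisymm
  · exact le_inf (Subgroup.centralizer_le (SetLike.coe_subset_coe.mpr le_sup_left))
      (Subgroup.centralizer_le (SetLike.coe_subset_coe.mpr le_sup_right))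
  · intro x hx
    rw [Subgroup.mem_inf] at hx
    rw [Subgroup.mem_centralizer_iff]
    intro g hg
    have hle : H ⊔ K ≤ Subgroup.centralizer {x} := by
      apply sup_le
      · intro a ha
        rw [Subgroup.mem_centralizer_iff]
        intro m hm
        rw [Set.mem_singleton_iff] at hm
        subst hm
        exact (Subgroup.mem_centralizer_iff.mp hx.1 a ha).symm
      · intro a ha
        rw [Subgroup.mem_centralizer_iff]
        intro m hm
        rw [Set.mem_singleton_iff] at hm
        subst hm
        exact (Subgroup.mem_centralizer_iff.mp hx.2 a ha).symm
    have := hle hg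
    rw [Subgroup.mem_centralizer_iff] at this
    exact (this x rfl).symm

lemma set_mul_subset_centralizer (H K : Subgroup G) :
    (Subgroup.centralizer (H : Set G) : Set G) * (Subgroup.centralizer (K : Set G) : Set G)
      ⊆ ((Subgroup.centralizer ((H ⊓ K : Subgroup G) : Set G)) : Set G) := by
  rintro x ⟨a, ha, b, hb, rfl⟩
  have haC : a ∈ Subgroup.centralizer ((H ⊓ K : Subgroup G) : Set G) :=
    Subgroup.centralizer_le (SetLike.coe_subset_coe.mpr inf_le_left) ha
  have hbC : b ∈ Subgroup.centralizer ((H ⊓ K : Subgroup G) : Set G) :=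
    Subgroup.centralizer_le (SetLike.coe_subset_coe.mpr inf_le_right) hb
  exact mul_mem haC hbC

lemma cd_pos [Finite G] (H : Subgroup G) : 0 < cdMeasure H :=
  Nat.mul_pos Nat.card_pos Nat.card_pos

/-- Key join lemma for the Chermak–Delgado lattice. -/
lemma cd_join [Finite G] (H K : Subgroup G)
    (hH : ∀ J : Subgroup G, cdMeasure J ≤ cdMeasure H)
    (hK : cdMeasure K = cdMeasure H) :
    ((H ⊔ K : Subgroup G) : Set G) = (H : Set G) * (K : Set G)
      ∧ cdMeasure (H ⊔ K) = cdMeasure H := by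
  classical
  set h := Nat.card H
  set k := Nat.card K
  set s := Nat.card (H ⊓ K : Subgroup G)
  set cH := Nat.card (Subgroup.centralizer (H : Set G))
  set cK := Nat.card (Subgroup.centralizer (K : Set G))
  set j := Nat.card (H ⊔ K : Subgroup G)
  set cJ := Nat.card (Subgroup.centralizer ((H ⊔ K : Subgroup G) : Set G))
  set cI := Nat.card (Subgroup.centralizer ((H ⊓ K : Subgroup G) : Set G))
  set PHK := Nat.card ((H : Set G) * (K : Set G) : Set G)
  set PC := Nat.card ((Subgroup.centralizer (H : Set G) : Set G)
      * (Subgroup.centralizer (K : Set G) : Set G) : Set G)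
  have e1 : PHK * s = h * k := card_mul_inf H K
  have e2 : PC * cJ = cH * cK := by
    have := card_mul_inf (Subgroup.centralizer (H : Set G)) (Subgroup.centralizer (K : Set G))
    rwa [← centralizer_sup H K] at this
  have i1 : PHK ≤ j := by
    have := Nat.card_mono ((H ⊔ K : Subgroup G) : Set G).toFinite (set_subset_closure_sup H K)
    exact this
  have i2 : PC ≤ cI := by
    have := Nat.card_mono ((Subgroup.centralizer ((H ⊓ K : Subgroup G) : Set G)) : Set G).toFinite
      (set_mul_subset_centralizer H K)
    exact this
  have i3 : j * cJ ≤ h * cH := hH (H ⊔ K)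
  have i4 : s * cI ≤ h * cH := hH (H ⊓ K)
  have hKH : k * cK = h * cH := hK
  -- positivity
  have pj : 0 < cJ := Nat.card_pos
  have ps : 0 < s := Nat.card_pos
  have pPC : 0 < PC := by
    have : (1 : G) ∈ (Subgroup.centralizer (H : Set G) : Set G)
        * (Subgroup.centralizer (K : Set G) : Set G) := by
      exact ⟨1, one_mem _, 1, one_mem _, by simp⟩
    have hne : ((Subgroup.centralizer (H : Set G) : Set G)
        * (Subgroup.centralizer (K : Set G) : Set G)).Nonempty := ⟨1, this⟩
    rw [Nat.card_pos_iff]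
    exact ⟨Set.Nonempty.to_subtype hne, Set.Finite.to_subtype (Set.toFinite _)⟩
  -- main chain
  have chain : (h * cH) * (h * cH) = (PHK * cJ) * (s * PC) := by
    calc (h * cH) * (h * cH) = (h * cH) * (k * cK) := by rw [hKH]
      _ = (h * k) * (cH * cK) := by ring
      _ = (PHK * s) * (PC * cJ) := by rw [e1, e2]
      _ = (PHK * cJ) * (s * PC) := by ring
  have le1 : (PHK * cJ) * (s * PC) ≤ (j * cJ) * (s * cI) :=
    Nat.mul_le_mul (Nat.mul_le_mul_right _ i1) (Nat.mul_le_mul_left _ i2)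
  have le2 : (j * cJ) * (s * cI) ≤ (h * cH) * (h * cH) := Nat.mul_le_mul i3 i4
  have eqall : (PHK * cJ) * (s * PC) = (j * cJ) * (s * cI) := by omega
  have eqm : (j * cJ) * (s * cI) = (h * cH) * (h * cH) := by omega
  -- cdMeasure (H ⊔ K) = cdMeasure H
  have hmJ : j * cJ = h * cH := by
    rcases Nat.lt_or_ge (j * cJ) (h * cH) with hlt | hge
    · exfalso
      have : (j * cJ) * (s * cI) < (h * cH) * (h * cH) := by
        have hsci : 0 < s * cI := Nat.mul_pos ps Nat.card_pos
        calc (j * cJ) * (s * cI) < (h * cH) * (s * cI) := by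
              exact Nat.mul_lt_mul_of_lt_of_le hlt (le_refl _) hsci
          _ ≤ (h * cH) * (h * cH) := Nat.mul_le_mul_left _ i4
      omega
    · exact le_antisymm i3 hge
  -- PHK = j
  have hPHK : PHK = j := by
    have h1 : (PHK * cJ) * (s * PC) ≤ (j * cJ) * (s * PC) :=
      Nat.mul_le_mul_right _ (Nat.mul_le_mul_right _ i1)
    have h2 : (j * cJ) * (s * PC) ≤ (j * cJ) * (s * cI) :=
      Nat.mul_le_mul_left _ (Nat.mul_le_mul_left _ i2)
    have : (PHK * cJ) * (s * PC) = (j * cJ) * (s * PC) := by omega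
    have hpos : 0 < cJ * (s * PC) := Nat.mul_pos pj (Nat.mul_pos ps pPC)
    have : PHK * (cJ * (s * PC)) = j * (cJ * (s * PC)) := by
      calc PHK * (cJ * (s * PC)) = (PHK * cJ) * (s * PC) := by ring
        _ = (j * cJ) * (s * PC) := this
        _ = j * (cJ * (s * PC)) := by ring
    exact Nat.eq_of_mul_eq_mul_right hpos this
  constructor
  · symm
    apply Set.eq_of_subset_of_ncard_le (set_subset_closure_sup H K)
    rw [← Nat.card_coe_set_eq, ← Nat.card_coe_set_eq]
    have : Nat.card (((H ⊔ K : Subgroup G) : Set G)) = j := by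
      simp [j]
    rw [this, ← hPHK]
  · exact hmJ

/-- conjugate subgroup -/
def conjSub (g : G) (L : Subgroup G) : Subgroup G :=
  Subgroup.map ((MulAut.conj g).toMonoidHom) L

lemma mem_conjSub {g x : G} {L : Subgroup G} :
    x ∈ conjSub g L ↔ ∃ y ∈ L, g * y * g⁻¹ = x := by
  simp [conjSub, Subgroup.mem_map]

lemma card_conjSub (g : G) (L : Subgroup G) : Nat.card (conjSub g L) = Nat.card L :=
  (Nat.card_congr (Subgroup.equivMapOfInjective L _ (MulAut.conj g).injective).toEquiv).symm

lemma centralizer_conjSub (g : G) (L : Subgroup G) :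
    Subgroup.centralizer ((conjSub g L : Subgroup G) : Set G)
      = conjSub g (Subgroup.centralizer (L : Set G)) := by
  ext x
  constructor
  · intro hx
    rw [Subgroup.mem_centralizer_iff] at hx
    rw [mem_conjSub]
    refine ⟨g⁻¹ * x * g, ?_, by group⟩
    rw [Subgroup.mem_centralizer_iff]
    intro l hl
    have hmem : g * l * g⁻¹ ∈ (conjSub g L : Subgroup G) := mem_conjSub.mpr ⟨l, hl, rfl⟩
    have := hx (g * l * g⁻¹) hmem
    have h2 := congrArg (fun z => g⁻¹ * z * g) this
    simpa [mul_assoc] using h2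
  · intro hx
    rw [mem_conjSub] at hx
    obtain ⟨y, hy, rfl⟩ := hx
    rw [Subgroup.mem_centralizer_iff] at hy ⊢
    intro m hm
    rw [SetLike.mem_coe, mem_conjSub] at hm
    obtain ⟨l, hl, rfl⟩ := hm
    have := hy l hl
    have h2 := congrArg (fun z => g * z * g⁻¹) this
    calc g * l * g⁻¹ * (g * y * g⁻¹) = g * (l * y) * g⁻¹ := by group
      _ = g * (y * l) * g⁻¹ := by rw [this]
      _ = g * y * g⁻¹ * (g * l * g⁻¹) := by group

lemma cd_conjSub [Finite G] (g : G) (L : Subgroup G) :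
    cdMeasure (conjSub g L) = cdMeasure L := by
  unfold cdMeasure
  rw [card_conjSub, centralizer_conjSub, card_conjSub]

/-- A group is not the product of two distinct conjugates of a proper "CD" subgroup. -/
lemma mem_of_conj_prod_univ {L : Subgroup G} {g : G}
    (h : (L : Set G) * ((conjSub g L : Subgroup G) : Set G) = Set.univ) : g ∈ L := by
  have hg : g⁻¹ ∈ (L : Set G) * ((conjSub g L : Subgroup G) : Set G) := by
    rw [h]; exact Set.mem_univ _
  obtain ⟨l, hl, m, hm, heq⟩ := hg
  rw [SetLike.mem_coe, mem_conjSub] at hm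
  obtain ⟨y, hy, rfl⟩ := hm
  -- g⁻¹ = l * (g * y * g⁻¹)  ⇒  1 = l * g * y  ⇒ g = l⁻¹ * y⁻¹
  have h1 : l * (g * y * g⁻¹) = g⁻¹ := heq
  have h2 : l * (g * y) = 1 := by
    have := congrArg (fun z => z * g) h1
    simpa [mul_assoc] using this
  have h3 : l⁻¹ = g * y := mul_eq_one_iff_inv_eq.mp h2
  have h4 : g = l⁻¹ * y⁻¹ := by rw [h3]; group
  rw [h4]
  exact mul_mem (inv_mem hl) (inv_mem hy)

/-- there is a maximal, hence normal, CD member above a proper CD member. -/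
lemma exists_normal_CD [Finite G] (A : Subgroup G)
    (hA : ∀ J : Subgroup G, cdMeasure J ≤ cdMeasure A) (hAtop : A ≠ ⊤) :
    ∃ N : Subgroup G, N.Normal ∧ A ≤ N ∧ N ≠ ⊤ ∧ (∀ J : Subgroup G, cdMeasure J ≤ cdMeasure N) := by
  classical
  have hAF : A ∈ {L : Subgroup G | (∀ J : Subgroup G, cdMeasure J ≤ cdMeasure L) ∧ A ≤ L ∧ L ≠ ⊤} :=
    ⟨hA, le_refl A, hAtop⟩
  obtain ⟨L, hLF, hLmax⟩ := Set.Finite.exists_maximalFor (id : Subgroup G → Subgroup G)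
    {L : Subgroup G | (∀ J : Subgroup G, cdMeasure J ≤ cdMeasure L) ∧ A ≤ L ∧ L ≠ ⊤}
    (Set.toFinite _) ⟨A, hAF⟩
  obtain ⟨hLcd, hAL, hLtop⟩ := hLF
  refine ⟨L, ?_, hAL, hLtop, hLcd⟩
  constructor
  intro x hx g
  have hK : cdMeasure (conjSub g L) = cdMeasure L := cd_conjSub g L
  obtain ⟨hset, hmJ⟩ := cd_join L (conjSub g L) hLcd hK
  by_cases hJ : L ⊔ conjSub g L = ⊤
  · have huniv : (L : Set G) * ((conjSub g L : Subgroup G) : Set G) = Set.univ := by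
      rw [← hset, hJ, Subgroup.coe_top]
    have hgL : g ∈ L := mem_of_conj_prod_univ huniv
    exact mul_mem (mul_mem hgL hx) (inv_mem hgL)
  · have hJcd : ∀ J : Subgroup G, cdMeasure J ≤ cdMeasure (L ⊔ conjSub g L) := by
      intro J
      rw [hmJ]
      exact hLcd J
    have hJF : (L ⊔ conjSub g L)
        ∈ {L : Subgroup G | (∀ J : Subgroup G, cdMeasure J ≤ cdMeasure L) ∧ A ≤ L ∧ L ≠ ⊤} := by
      rw [Set.mem_setOf_eq]
      exact ⟨hJcd, le_trans hAL le_sup_left, hJ⟩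
    have heq : L = L ⊔ conjSub g L := le_antisymm le_sup_left (hLmax hJF le_sup_left)
    have hle : conjSub g L ≤ L :=
      le_trans le_sup_right (le_of_eq heq.symm)
    exact hle (mem_conjSub.mpr ⟨x, hx, rfl⟩)

/-! transfer lemmas for subgroups of subgroups -/

lemma card_map_subtype (N : Subgroup G) (H' : Subgroup N) :
    Nat.card (Subgroup.map N.subtype H') = Nat.card H' :=
  (Nat.card_congr (Subgroup.equivMapOfInjective H' N.subtype N.subtype_injective).toEquiv).symm

lemma map_subtype_centralizer (N : Subgroup G) (H' : Subgroup N) :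
    Subgroup.map N.subtype (Subgroup.centralizer (H' : Set N))
      = Subgroup.centralizer ((Subgroup.map N.subtype H' : Subgroup G) : Set G) ⊓ N := by
  ext x
  rw [Subgroup.mem_inf]
  constructor
  · intro hx
    rw [Subgroup.mem_map] at hx
    obtain ⟨y, hy, rfl⟩ := hx
    rw [Subgroup.mem_centralizer_iff] at hy
    have hc : N.subtype y ∈ Subgroup.centralizer
        ((Subgroup.map N.subtype H' : Subgroup G) : Set G) := by
      rw [Subgroup.mem_centralizer_iff]
      rintro h hh
      rw [SetLike.mem_coe, Subgroup.mem_map] at hh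
      obtain ⟨h', hh', rfl⟩ := hh
      exact congrArg Subtype.val (hy h' hh')
    exact ⟨hc, y.2⟩
  · rintro ⟨hx1, hx2⟩
    rw [Subgroup.mem_map]
    refine ⟨⟨x, hx2⟩, ?_, rfl⟩
    rw [Subgroup.mem_centralizer_iff]
    intro h hh
    rw [Subgroup.mem_centralizer_iff] at hx1
    have := hx1 (h : G) (by
      rw [SetLike.mem_coe, Subgroup.mem_map]
      exact ⟨h, hh, rfl⟩)
    apply Subtype.ext
    simpa using this

lemma map_subtype_center (N : Subgroup G) :
    Subgroup.map N.subtype (Subgroup.center N)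
      = Subgroup.centralizer ((N : Subgroup G) : Set G) ⊓ N := by
  ext x
  rw [Subgroup.mem_inf]
  constructor
  · intro hx
    rw [Subgroup.mem_map] at hx
    obtain ⟨y, hy, rfl⟩ := hx
    rw [Subgroup.mem_center_iff] at hy
    have hc : N.subtype y ∈ Subgroup.centralizer ((N : Subgroup G) : Set G) := by
      rw [Subgroup.mem_centralizer_iff]
      intro h hh
      exact congrArg Subtype.val (hy ⟨h, hh⟩)
    exact ⟨hc, y.2⟩
  · rintro ⟨hx1, hx2⟩
    rw [Subgroup.mem_map]
    refine ⟨⟨x, hx2⟩, ?_, rfl⟩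
    rw [Subgroup.mem_center_iff]
    intro z
    rw [Subgroup.mem_centralizer_iff] at hx1
    have := hx1 (z : G) z.2
    apply Subtype.ext
    simpa using this

/-- transfer of the CD-maximality hypothesis to a CD member. -/
lemma cd_le_subgroup [Finite G] (M : Subgroup G)
    (hM : ∀ J : Subgroup G, cdMeasure J ≤ cdMeasure M) (H : Subgroup G) (hHM : H ≤ M) :
    Nat.card H * Nat.card (Subgroup.centralizer (H : Set G) ⊓ M : Subgroup G)
      ≤ Nat.card M * Nat.card (Subgroup.centralizer (M : Set G) ⊓ M : Subgroup G) := by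
  classical
  set X := Subgroup.centralizer (H : Set G) ⊓ M with hX
  set Y := Subgroup.centralizer (M : Set G) with hY
  have hsub : (X : Set G) * (Y : Set G) ⊆ ((Subgroup.centralizer (H : Set G)) : Set G) := by
    rintro w ⟨u, hu, v, hv, rfl⟩
    have hu' : u ∈ Subgroup.centralizer (H : Set G) := (inf_le_left : X ≤ _) hu
    have hv' : v ∈ Subgroup.centralizer (H : Set G) :=
      Subgroup.centralizer_le (SetLike.coe_subset_coe.mpr hHM) hv
    exact mul_mem hu' hv'
  have e := card_mul_inf X Y
  have i1 : Nat.card ((X : Set G) * (Y : Set G) : Set G)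
      ≤ Nat.card (Subgroup.centralizer (H : Set G)) := by
    have := Nat.card_mono ((Subgroup.centralizer (H : Set G)) : Set G).toFinite hsub
    simpa using this
  have i2 : Nat.card (X ⊓ Y : Subgroup G) ≤ Nat.card (Y ⊓ M : Subgroup G) := by
    apply card_le_of_le
    rw [hX]
    exact le_inf inf_le_right (le_trans inf_le_left inf_le_right)
  have key : Nat.card H * Nat.card X * Nat.card Y
      ≤ Nat.card M * Nat.card (Y ⊓ M : Subgroup G) * Nat.card Y := by
    calc Nat.card H * Nat.card X * Nat.card Y
        = Nat.card H * (Nat.card ((X : Set G) * (Y : Set G) : Set G)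
            * Nat.card (X ⊓ Y : Subgroup G)) := by rw [e]; ring
      _ ≤ Nat.card H * (Nat.card (Subgroup.centralizer (H : Set G))
            * Nat.card (Y ⊓ M : Subgroup G)) := by
          exact Nat.mul_le_mul_left _ (Nat.mul_le_mul i1 i2)
      _ = (Nat.card H * Nat.card (Subgroup.centralizer (H : Set G)))
            * Nat.card (Y ⊓ M : Subgroup G) := by ring
      _ ≤ (Nat.card M * Nat.card Y) * Nat.card (Y ⊓ M : Subgroup G) := by
          exact Nat.mul_le_mul_right _ (hM H)
      _ = Nat.card M * Nat.card (Y ⊓ M : Subgroup G) * Nat.card Y := by ring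
  have hYpos : 0 < Nat.card Y := Nat.card_pos
  have := Nat.le_of_mul_le_mul_right key hYpos
  calc Nat.card H * Nat.card (Subgroup.centralizer (H : Set G) ⊓ M : Subgroup G)
      = Nat.card H * Nat.card X := rfl
    _ ≤ Nat.card M * Nat.card (Y ⊓ M : Subgroup G) := this
    _ = Nat.card M * Nat.card (Subgroup.centralizer (M : Set G) ⊓ M : Subgroup G) := rfl

lemma normal_iSup {ι : Sort*} (S : ι → Subgroup G) (h : ∀ i, (S i).Normal) :
    (⨆ i, S i).Normal := by
  constructor
  intro x hx g
  refine Subgroup.iSup_induction S (C := fun y => g * y * g⁻¹ ∈ ⨆ i, S i) hx ?_ ?_ ?_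
  · intro i y hy
    exact le_iSup S i ((h i).conj_mem y hy g)
  · simpa using one_mem (⨆ i, S i)
  · intro a b ha hb
    have : g * (a * b) * g⁻¹ = (g * a * g⁻¹) * (g * b * g⁻¹) := by group
    rw [this]
    exact mul_mem ha hb

open scoped commutatorElement in
/-- Fitting's theorem, in the form needed: if `G` is generated by two
normal nilpotent subgroups, then `G` is nilpotent. -/
lemma fitting (H K : Subgroup G) [hHn : H.Normal] [hKn : K.Normal]
    (hHnil : Group.IsNilpotent H) (hKnil : Group.IsNilpotent K)
    (hsup : H ⊔ K = ⊤) : Group.IsNilpotent G := by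
  classical
  -- push the lower central series of H and K into G
  set Hs : ℕ → Subgroup G := fun i => Subgroup.map H.subtype (Subgroup.lowerCentralSeries (⊤ : Subgroup H) i) with hHs
  set Ks : ℕ → Subgroup G := fun i => Subgroup.map K.subtype (Subgroup.lowerCentralSeries (⊤ : Subgroup K) i) with hKs
  have hHs0 : Hs 0 = H := by
    rw [hHs]
    show Subgroup.map H.subtype ⊤ = H
    rw [← MonoidHom.range_eq_map, Subgroup.range_subtype]
  have hKs0 : Ks 0 = K := by
    rw [hKs]
    show Subgroup.map K.subtype ⊤ = K
    rw [← MonoidHom.range_eq_map, Subgroup.range_subtype]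
  have hHsucc : ∀ i, Hs (i + 1) = ⁅Hs i, H⁆ := by
    intro i
    rw [hHs]
    show Subgroup.map H.subtype ⁅Subgroup.lowerCentralSeries (⊤ : Subgroup H) i, ⊤⁆ = _
    rw [Subgroup.map_commutator, ← MonoidHom.range_eq_map, Subgroup.range_subtype]
  have hKsucc : ∀ i, Ks (i + 1) = ⁅Ks i, K⁆ := by
    intro i
    rw [hKs]
    show Subgroup.map K.subtype ⁅Subgroup.lowerCentralSeries (⊤ : Subgroup K) i, ⊤⁆ = _
    rw [Subgroup.map_commutator, ← MonoidHom.range_eq_map, Subgroup.range_subtype]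
  have hHnorm : ∀ i, (Hs i).Normal := by
    intro i
    induction i with
    | zero => rw [hHs0]; exact hHn
    | succ i ih => rw [hHsucc i]; exact @Subgroup.commutator_normal G _ (Hs i) H ih hHn
  have hKnorm : ∀ i, (Ks i).Normal := by
    intro i
    induction i with
    | zero => rw [hKs0]; exact hKn
    | succ i ih => rw [hKsucc i]; exact @Subgroup.commutator_normal G _ (Ks i) K ih hKn
  have hHanti : ∀ i j, i ≤ j → Hs j ≤ Hs i := by
    have hstep : ∀ i, Hs (i + 1) ≤ Hs i := by
      intro i
      rw [hHsucc i]
      exact @Subgroup.commutator_le_left G _ (Hs i) H (hHnorm i)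
    intro i j hij
    induction j with
    | zero => rw [Nat.le_zero.mp hij]
    | succ j ih =>
      rcases Nat.lt_or_ge i (j+1) with hlt | hge
      · exact le_trans (hstep j) (ih (Nat.lt_succ_iff.mp hlt))
      · rw [Nat.le_antisymm hij hge]
  have hKanti : ∀ i j, i ≤ j → Ks j ≤ Ks i := by
    have hstep : ∀ i, Ks (i + 1) ≤ Ks i := by
      intro i
      rw [hKsucc i]
      exact @Subgroup.commutator_le_left G _ (Ks i) K (hKnorm i)
    intro i j hij
    induction j with
    | zero => rw [Nat.le_zero.mp hij]
    | succ j ih =>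
      rcases Nat.lt_or_ge i (j+1) with hlt | hge
      · exact le_trans (hstep j) (ih (Nat.lt_succ_iff.mp hlt))
      · rw [Nat.le_antisymm hij hge]
  obtain ⟨cH, hcH⟩ := Subgroup.nilpotent_iff_lowerCentralSeries.mp hHnil
  obtain ⟨cK, hcK⟩ := Subgroup.nilpotent_iff_lowerCentralSeries.mp hKnil
  have hHbot : Hs cH = ⊥ := by rw [hHs]; show Subgroup.map _ _ = ⊥; rw [hcH, Subgroup.map_bot]
  have hKbot : Ks cK = ⊥ := by rw [hKs]; show Subgroup.map _ _ = ⊥; rw [hcK, Subgroup.map_bot]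
  -- the interpolating families
  set P : ℕ → Subgroup G := fun i => Nat.rec ⊤ (fun i _ => Hs i) i with hP
  set Q : ℕ → Subgroup G := fun j => Nat.rec ⊤ (fun j _ => Ks j) j with hQ
  have hP0 : P 0 = ⊤ := rfl
  have hPs : ∀ i, P (i + 1) = Hs i := fun i => rfl
  have hQ0 : Q 0 = ⊤ := rfl
  have hQs : ∀ j, Q (j + 1) = Ks j := fun j => rfl
  have hPnorm : ∀ i, (P i).Normal := by
    intro i
    cases i with
    | zero => rw [hP0]; exact ⟨fun n _ g => Subgroup.mem_top _⟩
    | succ i => rw [hPs i]; exact hHnorm i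
  have hQnorm : ∀ j, (Q j).Normal := by
    intro j
    cases j with
    | zero => rw [hQ0]; exact ⟨fun n _ g => Subgroup.mem_top _⟩
    | succ j => rw [hQs j]; exact hKnorm j
  -- key commutator estimates
  have commH : ∀ i j, ⁅P i ⊓ Q j, H⁆ ≤ P (i + 1) ⊓ Q j := by
    intro i j
    apply le_inf
    · have h1 : ⁅P i ⊓ Q j, H⁆ ≤ Hs i := by
        cases i with
        | zero =>
          have := @Subgroup.commutator_le_right G _ (P 0 ⊓ Q 0) H hHn
          calc ⁅P 0 ⊓ Q j, H⁆ ≤ H := @Subgroup.commutator_le_right G _ _ H hHn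
            _ ≤ Hs 0 := le_of_eq hHs0.symm
        | succ i' =>
          calc ⁅P (i'+1) ⊓ Q j, H⁆ ≤ ⁅Hs i', H⁆ :=
                Subgroup.commutator_mono (le_trans inf_le_left (le_of_eq (hPs i'))) (le_refl H)
            _ ≤ Hs (i'+1) := le_of_eq (hHsucc i').symm
      exact le_trans h1 (le_of_eq (hPs i).symm)
    · cases j with
      | zero =>
        calc ⁅P i ⊓ Q 0, H⁆ ≤ ⊤ := le_top
          _ ≤ Q 0 := le_of_eq hQ0.symm
      | succ j' =>
        calc ⁅P i ⊓ Q (j'+1), H⁆ ≤ ⁅Ks j', H⁆ :=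
              Subgroup.commutator_mono (le_trans inf_le_right (le_of_eq (hQs j'))) (le_refl H)
          _ ≤ Ks j' := @Subgroup.commutator_le_left G _ (Ks j') H (hKnorm j')
          _ ≤ Q (j'+1) := le_of_eq (hQs j').symm
  have commK : ∀ i j, ⁅P i ⊓ Q j, K⁆ ≤ P i ⊓ Q (j + 1) := by
    intro i j
    apply le_inf
    · cases i with
      | zero =>
        calc ⁅P 0 ⊓ Q j, K⁆ ≤ ⊤ := le_top
          _ ≤ P 0 := le_of_eq hP0.symm
      | succ i' =>
        calc ⁅P (i'+1) ⊓ Q j, K⁆ ≤ ⁅Hs i', K⁆ :=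
              Subgroup.commutator_mono (le_trans inf_le_left (le_of_eq (hPs i'))) (le_refl K)
          _ ≤ Hs i' := @Subgroup.commutator_le_left G _ (Hs i') K (hHnorm i')
          _ ≤ P (i'+1) := le_of_eq (hPs i').symm
    · have h1 : ⁅P i ⊓ Q j, K⁆ ≤ Ks j := by
        cases j with
        | zero =>
          calc ⁅P i ⊓ Q 0, K⁆ ≤ K := @Subgroup.commutator_le_right G _ _ K hKn
            _ ≤ Ks 0 := le_of_eq hKs0.symm
        | succ j' =>
          calc ⁅P i ⊓ Q (j'+1), K⁆ ≤ ⁅Ks j', K⁆ :=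
                Subgroup.commutator_mono (le_trans inf_le_right (le_of_eq (hQs j'))) (le_refl K)
            _ ≤ Ks (j'+1) := le_of_eq (hKsucc j').symm
      exact le_trans h1 (le_of_eq (hQs j).symm)
  -- the descending series
  set Dn : ℕ → Subgroup G := fun n => ⨆ p : {p : ℕ × ℕ // p.1 + p.2 = n + 1}, (P p.1.1 ⊓ Q p.1.2)
    with hDn
  have hDn_normal : ∀ n, (Dn n).Normal := by
    intro n
    apply normal_iSup
    rintro ⟨⟨i, j⟩, hij⟩
    exact @Subgroup.normal_inf_normal G _ _ _ (hPnorm i) (hQnorm j)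
  have hmemDn : ∀ n i j, i + j = n + 1 → P i ⊓ Q j ≤ Dn n := by
    intro n i j hij
    exact le_iSup (fun p : {p : ℕ × ℕ // p.1 + p.2 = n + 1} => P p.1.1 ⊓ Q p.1.2) ⟨(i, j), hij⟩
  have hDn0 : (⊤ : Subgroup G) ≤ Dn 0 := by
    rw [← hsup]
    apply sup_le
    · have h1 : H ≤ P 1 ⊓ Q 0 := le_inf (le_of_eq hHs0.symm) le_top
      exact le_trans h1 (hmemDn 0 1 0 rfl)
    · have h1 : K ≤ P 0 ⊓ Q 1 := le_inf le_top (le_of_eq hKs0.symm)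
      exact le_trans h1 (hmemDn 0 0 1 rfl)
  -- E is a descending central series
  set E : ℕ → Subgroup G := fun n => Nat.rec ⊤ (fun n _ => Dn n) n with hE
  have hEdesc : Subgroup.IsDescendingCentralSeries E := by
    constructor
    · rfl
    · intro x n hx g
      cases n with
      | zero =>
        exact hDn0 (Subgroup.mem_top _)
      | succ m =>
        -- x ∈ Dn m; show x * g * x⁻¹ * g⁻¹ ∈ Dn (m+1)
        have hx' : x ∈ Dn m := hx
        refine Subgroup.iSup_induction _
          (C := fun y => ∀ g : G, y * g * y⁻¹ * g⁻¹ ∈ Dn (m+1)) hx' ?_ ?_ ?_ g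
        · rintro ⟨⟨i, j⟩, hij⟩ y hy g
          -- decompose g = h * k
          have hg : g ∈ ((H ⊔ K : Subgroup G) : Set G) := by rw [hsup]; trivial
          rw [@Subgroup.mul_normal G _ H K hKn] at hg
          obtain ⟨h, hh, k, hk, rfl⟩ := hg
          have hyh : y * h * y⁻¹ * h⁻¹ ∈ Dn (m+1) := by
            have : ⁅y, h⁆ ∈ ⁅P i ⊓ Q j, H⁆ := Subgroup.commutator_mem_commutator hy hh
            have h2 : ⁅y, h⁆ ∈ P (i+1) ⊓ Q j := commH i j this
            have h3 : P (i+1) ⊓ Q j ≤ Dn (m+1) := hmemDn (m+1) (i+1) j (by omega)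
            simpa [commutatorElement_def] using h3 h2
          have hyk : y * k * y⁻¹ * k⁻¹ ∈ Dn (m+1) := by
            have : ⁅y, k⁆ ∈ ⁅P i ⊓ Q j, K⁆ := Subgroup.commutator_mem_commutator hy hk
            have h2 : ⁅y, k⁆ ∈ P i ⊓ Q (j+1) := commK i j this
            have h3 : P i ⊓ Q (j+1) ≤ Dn (m+1) := hmemDn (m+1) i (j+1) (by omega)
            simpa [commutatorElement_def] using h3 h2
          have hid : y * (h * k) * y⁻¹ * (h * k)⁻¹
              = (y * h * y⁻¹ * h⁻¹) * (h * (y * k * y⁻¹ * k⁻¹) * h⁻¹) := by group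
          rw [hid]
          exact mul_mem hyh ((hDn_normal (m+1)).conj_mem _ hyk h)
        · intro g
          simpa using one_mem (Dn (m+1))
        · intro a b ha hb g
          have hid : (a * b) * g * (a * b)⁻¹ * g⁻¹
              = (a * (b * g * b⁻¹ * g⁻¹) * a⁻¹) * (a * g * a⁻¹ * g⁻¹) := by group
          rw [hid]
          exact mul_mem ((hDn_normal (m+1)).conj_mem _ (hb g) a) (ha g)
  have hlower := Subgroup.descending_central_series_ge_lower E hEdesc
  -- the series terminates
  have hDbot : Dn (cH + cK + 1) = ⊥ := by
    rw [hDn]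
    apply le_bot_iff.mp
    apply iSup_le
    rintro ⟨⟨i, j⟩, hij⟩
    simp only
    rcases Nat.lt_or_ge cH i with hi | hi
    · -- i ≥ cH + 1, so P i ≤ Hs cH = ⊥
      have : P i ≤ ⊥ := by
        obtain ⟨i', rfl⟩ : ∃ i', i = i' + 1 := ⟨i - 1, by omega⟩
        rw [hPs i', ← hHbot]
        exact hHanti cH i' (by omega)
      exact le_trans inf_le_left this
    · have hj : cK < j := by omega
      have : Q j ≤ ⊥ := by
        obtain ⟨j', rfl⟩ : ∃ j', j = j' + 1 := ⟨j - 1, by omega⟩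
        rw [hQs j', ← hKbot]
        exact hKanti cK j' (by omega)
      exact le_trans inf_le_right this
  rw [Subgroup.nilpotent_iff_lowerCentralSeries]
  refine ⟨cH + cK + 2, ?_⟩
  apply le_bot_iff.mp
  have := hlower (cH + cK + 2)
  rw [show E (cH + cK + 2) = Dn (cH + cK + 1) from rfl, hDbot] at this
  exact this


lemma card_top_eq : Nat.card (⊤ : Subgroup G) = Nat.card G :=
  Nat.card_congr Subgroup.topEquiv.toEquiv

lemma nilpotent_of_center_top (h : Subgroup.center G = ⊤) : Group.IsNilpotent G :=
  ⟨⟨1, by rw [Subgroup.upperCentralSeries_one]; exact h⟩⟩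

lemma all_one_of_center_bot [hn : Group.IsNilpotent G] (h : Subgroup.center G = ⊥) :
    ∀ g : G, g = 1 := by
  have hstep : ∀ n, Subgroup.upperCentralSeries G n = ⊥ := by
    intro n
    induction n with
    | zero => exact Subgroup.upperCentralSeries_zero G
    | succ n ih =>
      apply le_bot_iff.mp
      intro x hx
      rw [Subgroup.mem_upperCentralSeries_succ_iff] at hx
      have hxc : x ∈ Subgroup.center G := by
        rw [Subgroup.mem_center_iff]
        intro y
        have h1 := hx y
        rw [ih, Subgroup.mem_bot] at h1
        have h2 : x * y * x⁻¹ = y := by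
          have := mul_inv_eq_one.mp h1
          exact this
        have h3 : x * y = y * x := by
          have := congrArg (fun z => z * x) h2
          simpa [mul_assoc] using this
        exact h3.symm
      rw [h] at hxc
      exact hxc
  obtain ⟨n, hn'⟩ := Group.IsNilpotent.nilpotent G
  intro g
  have : g ∈ Subgroup.upperCentralSeries G n := by rw [hn']; trivial
  rw [hstep n, Subgroup.mem_bot] at this
  exact this

lemma comm_sup_center (A : Subgroup G) (hA : ∀ x ∈ A, ∀ y ∈ A, Commute x y) :
    ∀ x ∈ A ⊔ Subgroup.center G, ∀ y ∈ A ⊔ Subgroup.center G, Commute x y := by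
  intro x hx y hy
  rw [← SetLike.mem_coe, Subgroup.mul_normal] at hx hy
  obtain ⟨a, ha, z, hz, rfl⟩ := hx
  obtain ⟨b, hb, w, hw, rfl⟩ := hy
  have hzc : ∀ t : G, Commute t z := fun t => Subgroup.mem_center_iff.mp hz t
  have hwc : ∀ t : G, Commute t w := fun t => Subgroup.mem_center_iff.mp hw t
  have hab := hA a ha b hb
  exact Commute.mul_left (Commute.mul_right hab (hwc a)) 
    (Commute.mul_right (hzc b).symm (hzc w).symm)

lemma le_centralizer_self (A : Subgroup G) (hA : ∀ x ∈ A, ∀ y ∈ A, Commute x y) :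
    A ≤ Subgroup.centralizer (A : Set G) := by
  intro x hx
  rw [Subgroup.mem_centralizer_iff]
  intro g hg
  exact hA g hg x hx

lemma card_lt_of_ne_top [Finite G] {N : Subgroup G} (h : N ≠ ⊤) :
    Nat.card N < Nat.card G := by
  have hmul := Subgroup.card_mul_index N
  have hidx : N.index ≠ 1 := fun hh => h (Subgroup.index_eq_one.mp hh)
  have hidx0 : N.index ≠ 0 := Subgroup.index_ne_zero_of_finite
  have hpos : 0 < Nat.card N := Nat.card_pos
  have h2 : 2 ≤ N.index := by omega
  calc Nat.card N < Nat.card N * 2 := by omega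
    _ ≤ Nat.card N * N.index := Nat.mul_le_mul_left _ h2
    _ = Nat.card G := hmul

/-- The main induction. -/
lemma main_ind : ∀ (n : ℕ) (G : Type u) [Group G] [Finite G], Nat.card G ≤ n →
    ∀ (A B : Subgroup G),
    (∀ H : Subgroup G, cdMeasure H ≤ Nat.card G * Nat.card (Subgroup.center G)) →
    (∀ x ∈ A, ∀ y ∈ A, Commute x y) → (∀ x ∈ B, ∀ y ∈ B, Commute x y) →
    ((A : Set G) * (B : Set G) = Set.univ) → Group.IsNilpotent G := by
  intro n
  induction n with
  | zero =>
    intro G _ _ hcard A B hcd hA hB hprod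
    exfalso
    have : 0 < Nat.card G := Nat.card_pos
    omega
  | succ n ih =>
    intro G _ _ hcard A B hcd hA hB hprod
    classical
    by_cases hcen : Subgroup.center G = ⊤
    · exact nilpotent_of_center_top hcen
    -- enlarge A and B by the center
    set A₁ := A ⊔ Subgroup.center G with hA₁def
    set B₁ := B ⊔ Subgroup.center G with hB₁def
    have hA₁ : ∀ x ∈ A₁, ∀ y ∈ A₁, Commute x y := comm_sup_center A hA
    have hB₁ : ∀ x ∈ B₁, ∀ y ∈ B₁, Commute x y := comm_sup_center B hB
    have hZA : Subgroup.center G ≤ A₁ := le_sup_right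
    have hZB : Subgroup.center G ≤ B₁ := le_sup_right
    have hprodA : (A : Set G) ⊆ (A₁ : Set G) := SetLike.coe_subset_coe.mpr le_sup_left
    have hprodB : (B : Set G) ⊆ (B₁ : Set G) := SetLike.coe_subset_coe.mpr le_sup_left
    have hprod₁ : (A₁ : Set G) * (B₁ : Set G) = Set.univ := by
      apply Set.eq_univ_of_univ_subset
      rw [← hprod]
      exact Set.mul_subset_mul hprodA hprodB
    have hsup₁ : A₁ ⊔ B₁ = ⊤ := by
      rw [eq_top_iff']
      intro x
      have hx : x ∈ (A₁ : Set G) * (B₁ : Set G) := by rw [hprod₁]; trivial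
      obtain ⟨p, hp, q, hq, rfl⟩ := hx
      exact Subgroup.mul_mem_sup hp hq
    have hAB_inf : A₁ ⊓ B₁ = Subgroup.center G := by
      apply le_antisymm
      · intro x hx
        rw [Subgroup.mem_inf] at hx
        rw [Subgroup.mem_center_iff]
        intro g
        have hg : g ∈ (A₁ : Set G) * (B₁ : Set G) := by rw [hprod₁]; trivial
        obtain ⟨p, hp, q, hq, rfl⟩ := hg
        have h1 : Commute x p := hA₁ x hx.1 p hp
        have h2 : Commute x q := hB₁ x hx.2 q hq
        exact (Commute.mul_left h1.symm h2.symm).eq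
      · exact le_inf hZA hZB
    -- cardinality bookkeeping
    have hkey := card_mul_inf A₁ B₁
    rw [hprod₁, hAB_inf] at hkey
    have hkey' : Nat.card G * Nat.card (Subgroup.center G) = Nat.card A₁ * Nat.card B₁ := by
      rw [← hkey, Nat.card_univ]
    have hAC : A₁ ≤ Subgroup.centralizer (A₁ : Set G) := le_centralizer_self A₁ hA₁
    have hBC : B₁ ≤ Subgroup.centralizer (B₁ : Set G) := le_centralizer_self B₁ hB₁
    have hapos : 0 < Nat.card A₁ := Nat.card_pos
    have hbpos : 0 < Nat.card B₁ := Nat.card_pos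
    have hmA : Nat.card A₁ * Nat.card (Subgroup.centralizer (A₁ : Set G))
        ≤ Nat.card A₁ * Nat.card B₁ := by
      rw [← hkey']
      exact hcd A₁
    have hmB : Nat.card B₁ * Nat.card (Subgroup.centralizer (B₁ : Set G))
        ≤ Nat.card A₁ * Nat.card B₁ := by
      rw [← hkey']
      exact hcd B₁
    have hcAb : Nat.card (Subgroup.centralizer (A₁ : Set G)) ≤ Nat.card B₁ :=
      Nat.le_of_mul_le_mul_left hmA hapos
    have hcBa : Nat.card (Subgroup.centralizer (B₁ : Set G)) ≤ Nat.card A₁ := by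
      have : Nat.card B₁ * Nat.card (Subgroup.centralizer (B₁ : Set G))
          ≤ Nat.card B₁ * Nat.card A₁ := by
        calc Nat.card B₁ * Nat.card (Subgroup.centralizer (B₁ : Set G))
            ≤ Nat.card A₁ * Nat.card B₁ := hmB
          _ = Nat.card B₁ * Nat.card A₁ := Nat.mul_comm _ _
      exact Nat.le_of_mul_le_mul_left this hbpos
    have hab' : Nat.card A₁ ≤ Nat.card B₁ := le_trans (card_le_of_le hAC) hcAb
    have hba' : Nat.card B₁ ≤ Nat.card A₁ := le_trans (card_le_of_le hBC) hcBa
    have habeq : Nat.card A₁ = Nat.card B₁ := le_antisymm hab' hba'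
    have hCAeq : Subgroup.centralizer (A₁ : Set G) = A₁ :=
      (eq_of_le_of_card_le hAC (le_trans hcAb (le_of_eq habeq.symm))).symm
    have hCBeq : Subgroup.centralizer (B₁ : Set G) = B₁ :=
      (eq_of_le_of_card_le hBC (le_trans hcBa (le_of_eq habeq))).symm
    have hmAeq : cdMeasure A₁ = Nat.card G * Nat.card (Subgroup.center G) := by
      unfold cdMeasure
      rw [hCAeq, hkey', habeq]
    have hmBeq : cdMeasure B₁ = Nat.card G * Nat.card (Subgroup.center G) := by
      unfold cdMeasure
      rw [hCBeq, hkey', habeq]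
    have hAcd : ∀ J : Subgroup G, cdMeasure J ≤ cdMeasure A₁ := by
      intro J; rw [hmAeq]; exact hcd J
    have hBcd : ∀ J : Subgroup G, cdMeasure J ≤ cdMeasure B₁ := by
      intro J; rw [hmBeq]; exact hcd J
    have hA₁top : A₁ ≠ ⊤ := by
      intro htop
      apply hcen
      rw [eq_top_iff']
      intro x
      rw [Subgroup.mem_center_iff]
      intro g
      exact (hA₁ g (htop ▸ Subgroup.mem_top g) x (htop ▸ Subgroup.mem_top x)).eq
    have hB₁top : B₁ ≠ ⊤ := by
      intro htop
      apply hcen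
      rw [eq_top_iff']
      intro x
      rw [Subgroup.mem_center_iff]
      intro g
      exact (hB₁ g (htop ▸ Subgroup.mem_top g) x (htop ▸ Subgroup.mem_top x)).eq
    obtain ⟨N, hNnorm, hAN, hNtop, hNcd⟩ := exists_normal_CD A₁ hAcd hA₁top
    obtain ⟨M, hMnorm, hBM, hMtop, hMcd⟩ := exists_normal_CD B₁ hBcd hB₁top
    -- apply the induction hypothesis inside N
    have hNnil : Group.IsNilpotent N := by
      have hcdN : ∀ H' : Subgroup N,
          cdMeasure H' ≤ Nat.card N * Nat.card (Subgroup.center N) := by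
        intro H'
        have h1 : Nat.card H' = Nat.card (Subgroup.map N.subtype H') :=
          (card_map_subtype N H').symm
        have h2 : Nat.card (Subgroup.centralizer (H' : Set N))
            = Nat.card ((Subgroup.centralizer
                ((Subgroup.map N.subtype H' : Subgroup G) : Set G) ⊓ N : Subgroup G)) := by
          rw [← map_subtype_centralizer N H']
          exact (card_map_subtype N _).symm
        have h3 : Nat.card (Subgroup.center N)
            = Nat.card ((Subgroup.centralizer ((N : Subgroup G) : Set G) ⊓ N : Subgroup G)) := by
          rw [← map_subtype_center N]
          exact (card_map_subtype N _).symm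
        unfold cdMeasure
        rw [h1, h2, h3]
        exact cd_le_subgroup N hNcd (Subgroup.map N.subtype H') (Subgroup.map_subtype_le H')
      have hA'comm : ∀ x ∈ A₁.subgroupOf N, ∀ y ∈ A₁.subgroupOf N, Commute x y := by
        intro x hx y hy
        rw [Subgroup.mem_subgroupOf] at hx hy
        have h := (hA₁ x.1 hx y.1 hy).eq
        apply Subtype.ext
        push_cast
        exact h
      have hB'comm : ∀ x ∈ (N ⊓ B₁).subgroupOf N, ∀ y ∈ (N ⊓ B₁).subgroupOf N, Commute x y := by
        intro x hx y hy
        rw [Subgroup.mem_subgroupOf] at hx hy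
        have h := (hB₁ x.1 hx.2 y.1 hy.2).eq
        apply Subtype.ext
        push_cast
        exact h
      have hprod' : ((A₁.subgroupOf N : Subgroup N) : Set N)
          * (((N ⊓ B₁).subgroupOf N : Subgroup N) : Set N) = Set.univ := by
        rw [Set.eq_univ_iff_forall]
        intro v
        have hv : (v : G) ∈ (A₁ : Set G) * (B₁ : Set G) := by rw [hprod₁]; trivial
        obtain ⟨p, hp, q, hq, hpq⟩ := hv
        have hpN : p ∈ N := hAN hp
        have hqN : q ∈ N := by
          have hq' : q = p⁻¹ * (v : G) := by rw [← hpq]; group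
          rw [hq']
          exact mul_mem (inv_mem hpN) v.2
        refine ⟨⟨p, hpN⟩, ?_, ⟨q, hqN⟩, ?_, ?_⟩
        · rw [SetLike.mem_coe, Subgroup.mem_subgroupOf]
          exact hp
        · rw [SetLike.mem_coe, Subgroup.mem_subgroupOf]
          exact ⟨hqN, hq⟩
        · apply Subtype.ext
          push_cast
          exact hpq
      have hNcard : Nat.card N ≤ n := by
        have := card_lt_of_ne_top hNtop
        omega
      exact ih N hNcard (A₁.subgroupOf N) ((N ⊓ B₁).subgroupOf N) hcdN hA'comm hB'comm hprod'
    -- apply the induction hypothesis inside M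
    have hMnil : Group.IsNilpotent M := by
      have hcdM : ∀ H' : Subgroup M,
          cdMeasure H' ≤ Nat.card M * Nat.card (Subgroup.center M) := by
        intro H'
        have h1 : Nat.card H' = Nat.card (Subgroup.map M.subtype H') :=
          (card_map_subtype M H').symm
        have h2 : Nat.card (Subgroup.centralizer (H' : Set M))
            = Nat.card ((Subgroup.centralizer
                ((Subgroup.map M.subtype H' : Subgroup G) : Set G) ⊓ M : Subgroup G)) := by
          rw [← map_subtype_centralizer M H']
          exact (card_map_subtype M _).symm
        have h3 : Nat.card (Subgroup.center M)
            = Nat.card ((Subgroup.centralizer ((M : Subgroup G) : Set G) ⊓ M : Subgroup G)) := by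
          rw [← map_subtype_center M]
          exact (card_map_subtype M _).symm
        unfold cdMeasure
        rw [h1, h2, h3]
        exact cd_le_subgroup M hMcd (Subgroup.map M.subtype H') (Subgroup.map_subtype_le H')
      have hA'comm : ∀ x ∈ (M ⊓ A₁).subgroupOf M, ∀ y ∈ (M ⊓ A₁).subgroupOf M, Commute x y := by
        intro x hx y hy
        rw [Subgroup.mem_subgroupOf] at hx hy
        have h := (hA₁ x.1 hx.2 y.1 hy.2).eq
        apply Subtype.ext
        push_cast
        exact h
      have hB'comm : ∀ x ∈ B₁.subgroupOf M, ∀ y ∈ B₁.subgroupOf M, Commute x y := by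
        intro x hx y hy
        rw [Subgroup.mem_subgroupOf] at hx hy
        have h := (hB₁ x.1 hx y.1 hy).eq
        apply Subtype.ext
        push_cast
        exact h
      have hprod' : (((M ⊓ A₁).subgroupOf M : Subgroup M) : Set M)
          * ((B₁.subgroupOf M : Subgroup M) : Set M) = Set.univ := by
        rw [Set.eq_univ_iff_forall]
        intro v
        have hv : (v : G) ∈ (A₁ : Set G) * (B₁ : Set G) := by rw [hprod₁]; trivial
        obtain ⟨p, hp, q, hq, hpq⟩ := hv
        have hqM : q ∈ M := hBM hq
        have hpM : p ∈ M := by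
          have hp' : p = (v : G) * q⁻¹ := by rw [← hpq]; group
          rw [hp']
          exact mul_mem v.2 (inv_mem hqM)
        refine ⟨⟨p, hpM⟩, ?_, ⟨q, hqM⟩, ?_, ?_⟩
        · rw [SetLike.mem_coe, Subgroup.mem_subgroupOf]
          exact ⟨hpM, hp⟩
        · rw [SetLike.mem_coe, Subgroup.mem_subgroupOf]
          exact hq
        · apply Subtype.ext
          push_cast
          exact hpq
      have hMcard : Nat.card M ≤ n := by
        have := card_lt_of_ne_top hMtop
        omega
      exact ih M hMcard ((M ⊓ A₁).subgroupOf M) (B₁.subgroupOf M) hcdM hA'comm hB'comm hprod'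
    -- Fitting's theorem finishes the proof
    have hsupNM : N ⊔ M = ⊤ := by
      rw [eq_top_iff']
      intro x
      have hx : x ∈ (A₁ : Set G) * (B₁ : Set G) := by rw [hprod₁]; trivial
      obtain ⟨p, hp, q, hq, rfl⟩ := hx
      exact Subgroup.mul_mem_sup (hAN hp) (hBM hq)
    exact @fitting G _ N M hNnorm hMnorm hNnil hMnil hsupNM

/-- final theorem assembly (to be merged). -/
theorem final {G : Type u} [Group G] [Fintype G]
    (hbot : ∀ K : Subgroup G, cdMeasure K ≤ cdMeasure (⊥ : Subgroup G))
    (A B : Subgroup G)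
    (hA : ∀ x ∈ A, ∀ y ∈ A, Commute x y) (hB : ∀ x ∈ B, ∀ y ∈ B, Commute x y)
    (hprod : (A : Set G) * (B : Set G) = Set.univ) :
    ∀ g : G, g = 1 := by
  have hbotval : cdMeasure (⊥ : Subgroup G) = Nat.card G := by
    unfold cdMeasure
    rw [Subgroup.card_bot, one_mul, Subgroup.coe_bot]
    have h1 : Subgroup.centralizer ({1} : Set G) = ⊤ := by
      rw [eq_top_iff']
      intro x
      rw [Subgroup.mem_centralizer_iff]
      rintro y hy
      rw [Set.mem_singleton_iff] at hy
      subst hy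
      simp
    rw [h1]
    exact card_top_eq
  have hzbot : Subgroup.center G = ⊥ := by
    have h2 : Subgroup.centralizer ((Subgroup.center G : Subgroup G) : Set G) = ⊤ := by
      rw [eq_top_iff']
      intro x
      rw [Subgroup.mem_centralizer_iff]
      intro y hy
      exact (Subgroup.mem_center_iff.mp hy x).symm
    have h1 : cdMeasure (Subgroup.center G) ≤ Nat.card G := by
      rw [← hbotval]; exact hbot _
    unfold cdMeasure at h1
    rw [h2, card_top_eq] at h1
    have hpos : 0 < Nat.card G := Nat.card_pos
    have hc1 : Nat.card (Subgroup.center G) = 1 := by nlinarith [Nat.card_pos (α := Subgroup.center G)]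
    exact Subgroup.eq_bot_of_card_eq _ hc1
  have hcdtop : ∀ H : Subgroup G, cdMeasure H ≤ Nat.card G * Nat.card (Subgroup.center G) := by
    intro H
    rw [hzbot, Subgroup.card_bot, mul_one, ← hbotval]
    exact hbot H
  have hnil : Group.IsNilpotent G := main_ind (Nat.card G) G (le_refl _) A B hcdtop hA hB hprod
  exact @all_one_of_center_bot G _ hnil hzbot

end CDproof

theorem stmt9 {G : Type*} [Group G] [Fintype G] (hbot : (⊥ : Subgroup G) ∈ CD G)
    (A B : Subgroup G)
    (hA : ∀ x ∈ A, ∀ y ∈ A, Commute x y) (hB : ∀ x ∈ B, ∀ y ∈ B, Commute x y)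
    (hprod : (A : Set G) * (B : Set G) = Set.univ) :
    ∀ g : G, g = 1 := by
  exact CDproof.final (fun K => hbot K) A B hA hB hprod
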